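/- Let R satisfy (H1), a ∈ ℝ₊ᵈ, and fix n ≥ 1. For the solution of SP({a+Σu_n}, R): z_n^{(a)} = 0 if and only if −R⁻¹u_n ≥ R⁻¹z_{n−1}^{(a)}, if and only if −R⁻¹a + Σ_{ℓ=1}^n(−R⁻¹u_ℓ) ≥ y_{n−1}^{(a)}. Moreover, in that case y_n^{(a)} = −R⁻¹a + Σ_{ℓ=1}^n(−R⁻¹u_ℓ). -/

import Mathlib

open Matrix Finset MeasureTheory ProbabilityTheory

noncomputable section

/-- A pair `(ξ, ζ)` solves the linear complementarity problem `LCP(η, M)`. -/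
def IsLCPSol {d : ℕ} (M : Matrix (Fin d) (Fin d) ℝ) (η ξ ζ : Fin d → ℝ) : Prop :=
  ζ = η + M *ᵥ ξ ∧ (∀ i, 0 ≤ ξ i) ∧ (∀ i, 0 ≤ ζ i) ∧ ξ ⬝ᵥ ζ = 0

/-- `(y, z)` solves the Skorokhod problem `SP({a + Σ u_n}, M)` in the orthant. -/
def IsSPSol {d : ℕ} (M : Matrix (Fin d) (Fin d) ℝ) (a : Fin d → ℝ)
    (u y z : ℕ → Fin d → ℝ) : Prop :=
  y 0 = 0 ∧ z 0 = a ∧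
  ∀ n, 1 ≤ n →
    z n = z (n - 1) + u n + M *ᵥ (y n - y (n - 1)) ∧
    (∀ i, 0 ≤ z n i) ∧ (∀ i, 0 ≤ y n i - y (n - 1) i) ∧
    z n ⬝ᵥ (y n - y (n - 1)) = 0

/-- Maximum principle: if `Q` is entrywise nonnegative with row sums `< t`, and
`(t•1 - Q) x = b` with `b ≥ 0`, then `x ≥ 0`. -/
lemma maxPrinciple {d : ℕ} (Q : Matrix (Fin d) (Fin d) ℝ) (hQ : ∀ i j, 0 ≤ Q i j)
    (t : ℝ) (hrow : ∀ i, ∑ j, Q i j < t) (x b : Fin d → ℝ)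
    (hxb : (t • (1 : Matrix (Fin d) (Fin d) ℝ) - Q) *ᵥ x = b) (hb : ∀ i, 0 ≤ b i)
    (i : Fin d) : 0 ≤ x i := by
  obtain ⟨i0, -, hmin⟩ := Finset.exists_min_image Finset.univ x ⟨i, Finset.mem_univ i⟩
  by_contra hneg
  push_neg at hneg
  have hxi0 : x i0 < 0 := lt_of_le_of_lt (hmin i (Finset.mem_univ i)) hneg
  have h1 : b i0 = t * x i0 - ∑ j, Q i0 j * x j := by
    rw [← hxb]
    simp only [Matrix.mulVec, dotProduct, Matrix.sub_apply, Matrix.smul_apply,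
      smul_eq_mul, Matrix.one_apply, sub_mul, Finset.sum_sub_distrib, mul_ite, mul_one, mul_zero,
      ite_mul, zero_mul, Finset.sum_ite_eq, Finset.mem_univ, if_true]
  have h2 : (∑ j, Q i0 j) * x i0 ≤ ∑ j, Q i0 j * x j := by
    rw [Finset.sum_mul]
    exact Finset.sum_le_sum fun j _ =>
      mul_le_mul_of_nonneg_left (hmin j (Finset.mem_univ j)) (hQ i0 j)
  have h3 : t * x i0 < (∑ j, Q i0 j) * x i0 :=
    mul_lt_mul_of_neg_right (hrow i0) hxi0
  have := hb i0
  linarith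

/-- Inverse-positivity under a row-sum condition. -/
lemma invColNonneg {d : ℕ} (Q : Matrix (Fin d) (Fin d) ℝ) (hQ : ∀ i j, 0 ≤ Q i j)
    (t : ℝ) (hrow : ∀ i, ∑ j, Q i j < t)
    (hu : IsUnit (t • (1 : Matrix (Fin d) (Fin d) ℝ) - Q).det) (i j : Fin d) :
    0 ≤ (t • (1 : Matrix (Fin d) (Fin d) ℝ) - Q)⁻¹ i j := by
  set A := t • (1 : Matrix (Fin d) (Fin d) ℝ) - Q with hA
  refine maxPrinciple Q hQ t hrow (fun k => A⁻¹ k j) (fun k => (1 : Matrix (Fin d) (Fin d) ℝ) k j)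
    ?_ (fun k => by simp [Matrix.one_apply]; positivity) i
  funext k
  have h := congrArg (fun M => M k j) (Matrix.mul_nonsing_inv A hu)
  simpa [Matrix.mul_apply, Matrix.mulVec, dotProduct, hA] using h

/-- Spectral radius `< 1` gives invertibility of `t•1 - Pᵀ` for `t ≥ 1`. -/
lemma unitOfSpec {d : ℕ} (P : Matrix (Fin d) (Fin d) ℝ)
    (hspec : spectralRadius ℝ P < 1) {t : ℝ} (ht : 1 ≤ t) :
    IsUnit (t • (1 : Matrix (Fin d) (Fin d) ℝ) - Pᵀ).det := by
  have h1 : (1 : ENNReal) ≤ ((‖t‖₊ : NNReal) : ENNReal) := by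
    rw [ENNReal.one_le_coe_iff, ← NNReal.coe_le_coe, coe_nnnorm, Real.norm_eq_abs]
    exact le_trans ht (le_abs_self t)
  have h2 : IsUnit (t • (1 : Matrix (Fin d) (Fin d) ℝ) - P) := by
    by_contra hcon
    have hts : t ∈ spectrum ℝ P := by
      rw [spectrum.mem_iff, Algebra.algebraMap_eq_smul_one]
      exact hcon
    have : ((‖t‖₊ : NNReal) : ENNReal) ≤ spectralRadius ℝ P :=
      le_iSup₂ (f := fun k (_ : k ∈ spectrum ℝ P) => ((‖k‖₊ : NNReal) : ENNReal)) t hts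
    exact absurd (lt_of_le_of_lt (le_trans h1 this) hspec) (lt_irrefl _)
  rw [Matrix.isUnit_iff_isUnit_det] at h2
  have h3 : (t • (1 : Matrix (Fin d) (Fin d) ℝ) - Pᵀ) =
      (t • (1 : Matrix (Fin d) (Fin d) ℝ) - P)ᵀ := by
    rw [Matrix.transpose_sub, Matrix.transpose_smul, Matrix.transpose_one]
  rw [h3, Matrix.det_transpose]
  exact h2

/-- Inverse-positivity of the M-matrix `1 - Q`. -/
lemma invNonnegAux {d : ℕ} (Q : Matrix (Fin d) (Fin d) ℝ) (hQ : ∀ i j, 0 ≤ Q i j)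
    (hu : ∀ t : ℝ, 1 ≤ t → IsUnit (t • (1 : Matrix (Fin d) (Fin d) ℝ) - Q).det)
    (i j : Fin d) : 0 ≤ ((1 : Matrix (Fin d) (Fin d) ℝ) - Q)⁻¹ i j := by
  set t0 : ℝ := 1 + ∑ k, ∑ l, Q k l with ht0
  have hsnn : (0:ℝ) ≤ ∑ k, ∑ l, Q k l :=
    Finset.sum_nonneg fun k _ => Finset.sum_nonneg fun l _ => hQ k l
  have ht01 : (1:ℝ) ≤ t0 := by simp [ht0]; linarith
  have hrow0 : ∀ i, ∑ l, Q i l < t0 := by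
    intro i
    have : ∑ l, Q i l ≤ ∑ k, ∑ l, Q k l :=
      Finset.single_le_sum (f := fun k => ∑ l, Q k l)
        (fun k _ => Finset.sum_nonneg fun l _ => hQ k l) (Finset.mem_univ i)
    simp [ht0]; linarith
  set A : Set ℝ := {t | t ∈ Set.Icc 1 t0 ∧ ∀ i j, 0 ≤ (t • (1 : Matrix (Fin d) (Fin d) ℝ) - Q)⁻¹ i j}
    with hAdef
  have hAt0 : t0 ∈ A := ⟨⟨ht01, le_refl _⟩, invColNonneg Q hQ t0 hrow0 (hu t0 ht01)⟩
  have hMc : Continuous fun t : ℝ => t • (1 : Matrix (Fin d) (Fin d) ℝ) - Q := by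
    apply continuous_matrix
    intro i j
    simp only [Matrix.sub_apply, Matrix.smul_apply, smul_eq_mul]
    fun_prop
  have hdet : Continuous fun t : ℝ => (t • (1 : Matrix (Fin d) (Fin d) ℝ) - Q).det :=
    hMc.matrix_det
  have hadj : ∀ i j, Continuous fun t : ℝ =>
      (t • (1 : Matrix (Fin d) (Fin d) ℝ) - Q).adjugate i j := by
    intro i j
    exact (hMc.matrix_adjugate.matrix_elem i j)
  have hdetne : ∀ t ∈ Set.Icc (1:ℝ) t0, (t • (1 : Matrix (Fin d) (Fin d) ℝ) - Q).det ≠ 0 := by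
    intro t htt
    exact (hu t htt.1).ne_zero
  have hentry : ∀ i j, ContinuousOn
      (fun t : ℝ => (t • (1 : Matrix (Fin d) (Fin d) ℝ) - Q)⁻¹ i j) (Set.Icc 1 t0) := by
    intro i j
    have : ∀ t ∈ Set.Icc (1:ℝ) t0,
        (t • (1 : Matrix (Fin d) (Fin d) ℝ) - Q)⁻¹ i j
        = ((t • (1 : Matrix (Fin d) (Fin d) ℝ) - Q).det)⁻¹
          * (t • (1 : Matrix (Fin d) (Fin d) ℝ) - Q).adjugate i j := by
      intro t htt
      rw [Matrix.inv_def, Matrix.smul_apply, smul_eq_mul, Ring.inverse_eq_inv]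
    apply ContinuousOn.congr _ this
    exact ((hdet.continuousOn.inv₀ hdetne).mul (hadj i j).continuousOn)
  have hAclosed : IsClosed A := by
    have : A = Set.Icc 1 t0 ∩ ⋂ i, ⋂ j, (Set.Icc 1 t0 ∩
        (fun t : ℝ => (t • (1 : Matrix (Fin d) (Fin d) ℝ) - Q)⁻¹ i j) ⁻¹' Set.Ici 0) := by
      ext t
      simp only [hAdef, Set.mem_setOf_eq, Set.mem_inter_iff, Set.mem_iInter, Set.mem_preimage,
        Set.mem_Ici]
      constructor
      · rintro ⟨h1, h2⟩; exact ⟨h1, fun i j => ⟨h1, h2 i j⟩⟩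
      · rintro ⟨h1, h2⟩; exact ⟨h1, fun i j => (h2 i j).2⟩
    rw [this]
    exact isClosed_Icc.inter (isClosed_iInter fun i => isClosed_iInter fun j =>
      (hentry i j).preimage_isClosed_of_isClosed isClosed_Icc isClosed_Ici)
  have hAbdd : BddBelow A := ⟨1, fun x hx => hx.1.1⟩
  set m : ℝ := sInf A with hm
  have hmA : m ∈ A := hAclosed.csInf_mem ⟨t0, hAt0⟩ hAbdd
  have hm1 : 1 ≤ m := hmA.1.1
  have hmone : m = 1 := by
    by_contra hne
    have hmgt : 1 < m := lt_of_le_of_ne hm1 (Ne.symm hne)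
    set B : Matrix (Fin d) (Fin d) ℝ := (m • (1 : Matrix (Fin d) (Fin d) ℝ) - Q)⁻¹ with hB
    have hBnn : ∀ i j, 0 ≤ B i j := hmA.2
    set c : ℝ := ∑ k, ∑ l, B k l with hc
    have hcnn : 0 ≤ c := Finset.sum_nonneg fun k _ => Finset.sum_nonneg fun l _ => hBnn k l
    set ε : ℝ := min (m - 1) (1 / (2 * (c + 1))) with hε
    have hεpos : 0 < ε := lt_min (by linarith) (by positivity)
    set s : ℝ := m - ε with hs
    have hs1 : 1 ≤ s := by
      have : ε ≤ m - 1 := min_le_left _ _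
      simp only [hs]; linarith
    have hsm : s < m := by simp only [hs]; linarith
    have hst0 : s ≤ t0 := le_trans (le_of_lt hsm) hmA.1.2
    have hum : IsUnit (m • (1 : Matrix (Fin d) (Fin d) ℝ) - Q).det := hu m hm1
    have hus : IsUnit (s • (1 : Matrix (Fin d) (Fin d) ℝ) - Q).det := hu s hs1
    have hkey : s • (1 : Matrix (Fin d) (Fin d) ℝ) - Q
        = (m • (1 : Matrix (Fin d) (Fin d) ℝ) - Q) * ((1 : Matrix (Fin d) (Fin d) ℝ) - ε • B) := by
      rw [Matrix.mul_sub, Matrix.mul_one, Matrix.mul_smul, Matrix.mul_nonsing_inv _ hum]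
      rw [hs, sub_smul]
      abel
    have hu2 : IsUnit ((1 : Matrix (Fin d) (Fin d) ℝ) - ε • B).det := by
      have := hus
      rw [hkey, Matrix.det_mul] at this
      exact isUnit_of_mul_isUnit_right this
    have hrowB : ∀ i, ∑ l, (ε • B) i l < 1 := by
      intro i
      have h1 : ∑ l, B i l ≤ c :=
        Finset.single_le_sum (f := fun k => ∑ l, B k l)
          (fun k _ => Finset.sum_nonneg fun l _ => hBnn k l) (Finset.mem_univ i)
      have h2 : ε ≤ 1 / (2 * (c + 1)) := min_le_right _ _
      have h3 : ∑ l, (ε • B) i l = ε * ∑ l, B i l := by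
        simp [Finset.mul_sum]
      rw [h3]
      have h4 : ε * ∑ l, B i l ≤ ε * c := mul_le_mul_of_nonneg_left h1 (le_of_lt hεpos)
      have h5 : ε * c ≤ (1 / (2 * (c + 1))) * c := mul_le_mul_of_nonneg_right h2 hcnn
      have h6 : (1 / (2 * (c + 1))) * c < 1 := by
        rw [div_mul_eq_mul_div, div_lt_one (by positivity)]
        linarith
      linarith
    have hεBnn : ∀ i j, 0 ≤ (ε • B) i j := fun i j => by
      simp only [Matrix.smul_apply, smul_eq_mul]
      exact mul_nonneg (le_of_lt hεpos) (hBnn i j)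
    have hinv2 : ∀ i j, 0 ≤ ((1 : Matrix (Fin d) (Fin d) ℝ) - ε • B)⁻¹ i j := by
      intro i j
      have := invColNonneg (ε • B) hεBnn 1 hrowB (by rwa [one_smul]) i j
      rwa [one_smul] at this
    have hsinv : (s • (1 : Matrix (Fin d) (Fin d) ℝ) - Q)⁻¹
        = ((1 : Matrix (Fin d) (Fin d) ℝ) - ε • B)⁻¹ * B := by
      rw [hkey, Matrix.mul_inv_rev]
    have hsA : s ∈ A := by
      refine ⟨⟨hs1, hst0⟩, fun i j => ?_⟩
      rw [hsinv, Matrix.mul_apply]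
      exact Finset.sum_nonneg fun k _ => mul_nonneg (hinv2 i k) (hBnn k j)
    exact absurd (csInf_le hAbdd hsA) (not_le.mpr hsm)
  have := hmA.2 i j
  rwa [hmone, one_smul] at this

theorem stmt_8 {d : ℕ} (P : Matrix (Fin d) (Fin d) ℝ)
    (hdiag : ∀ i, P i i = 0) (hnonneg : ∀ i j, 0 ≤ P i j)
    (hspec : spectralRadius ℝ P < 1)
    (a : Fin d → ℝ) (ha : ∀ i, 0 ≤ a i) (u y z : ℕ → Fin d → ℝ)
    (hSP : IsSPSol (1 - Pᵀ) a u y z) (n : ℕ) (hn : 1 ≤ n) :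
    ((z n = 0) ↔
      ∀ i, ((1 - Pᵀ)⁻¹ *ᵥ z (n - 1)) i ≤ -(((1 - Pᵀ)⁻¹ *ᵥ u n) i)) ∧
    ((z n = 0) ↔
      ∀ i, y (n - 1) i ≤
        -(((1 - Pᵀ)⁻¹ *ᵥ a) i) + ∑ ℓ ∈ Finset.Icc 1 n, -(((1 - Pᵀ)⁻¹ *ᵥ u ℓ) i)) ∧
    (z n = 0 →
      y n = -((1 - Pᵀ)⁻¹ *ᵥ a) + ∑ ℓ ∈ Finset.Icc 1 n, -((1 - Pᵀ)⁻¹ *ᵥ u ℓ)) := by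
  obtain ⟨m, rfl⟩ : ∃ m, n = m + 1 := ⟨n - 1, (Nat.succ_pred_eq_of_pos hn).symm⟩
  set R : Matrix (Fin d) (Fin d) ℝ := 1 - Pᵀ with hR
  have huR : IsUnit R.det := by
    have := unitOfSpec P hspec (le_refl (1:ℝ))
    rwa [one_smul] at this
  have hinvnn : ∀ i j, 0 ≤ R⁻¹ i j := fun i j =>
    invNonnegAux Pᵀ (fun i j => hnonneg j i) (fun t ht => unitOfSpec P hspec ht) i j
  have hmvnn : ∀ x : Fin d → ℝ, (∀ i, 0 ≤ x i) → ∀ i, 0 ≤ (R⁻¹ *ᵥ x) i := by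
    intro x hx i
    simp only [Matrix.mulVec, dotProduct]
    exact Finset.sum_nonneg fun j _ => mul_nonneg (hinvnn i j) (hx j)
  have hRid : R⁻¹ = 1 + R⁻¹ * Pᵀ := by
    have h1 : R⁻¹ * R = 1 := Matrix.nonsing_inv_mul _ huR
    calc R⁻¹ = R⁻¹ * (R + Pᵀ) := by rw [hR, sub_add_cancel, Matrix.mul_one]
    _ = 1 + R⁻¹ * Pᵀ := by rw [Matrix.mul_add, h1]
  have hge : ∀ x : Fin d → ℝ, (∀ i, 0 ≤ x i) → ∀ i, x i ≤ (R⁻¹ *ᵥ x) i := by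
    intro x hx i
    conv_rhs => rw [hRid]
    rw [Matrix.add_mulVec, Matrix.one_mulVec, Pi.add_apply]
    have h0 : 0 ≤ ((R⁻¹ * Pᵀ) *ᵥ x) i := by
      simp only [Matrix.mulVec, dotProduct]
      refine Finset.sum_nonneg fun j _ => mul_nonneg ?_ (hx j)
      rw [Matrix.mul_apply]
      exact Finset.sum_nonneg fun k _ =>
        mul_nonneg (hinvnn i k) (by rw [Matrix.transpose_apply]; exact hnonneg j k)
    linarith
  have hcancel : ∀ v : Fin d → ℝ, R⁻¹ *ᵥ (R *ᵥ v) = v := by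
    intro v
    rw [Matrix.mulVec_mulVec, Matrix.nonsing_inv_mul _ huR, Matrix.one_mulVec]
  have hrec : ∀ k : ℕ, ∀ i,
      (R⁻¹ *ᵥ z (k+1)) i = (R⁻¹ *ᵥ z k) i + (R⁻¹ *ᵥ u (k+1)) i + (y (k+1) i - y k i) := by
    intro k i
    obtain ⟨E, -, -, -⟩ := hSP.2.2 (k+1) (Nat.le_add_left 1 k)
    simp only [Nat.add_sub_cancel] at E
    have hE2 : R⁻¹ *ᵥ z (k+1) = R⁻¹ *ᵥ z k + R⁻¹ *ᵥ u (k+1) + (y (k+1) - y k) := by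
      rw [E, Matrix.mulVec_add, Matrix.mulVec_add, hcancel]
    have := congrFun hE2 i
    simpa using this
  have htel : ∀ k : ℕ, ∀ i,
      y k i = -((R⁻¹ *ᵥ a) i) + (∑ ℓ ∈ Finset.Icc 1 k, -((R⁻¹ *ᵥ u ℓ) i)) + (R⁻¹ *ᵥ z k) i := by
    intro k
    induction k with
    | zero =>
      intro i
      rw [hSP.1, hSP.2.1]
      simp [Finset.Icc_eq_empty (by omega : ¬ (1:ℕ) ≤ 0)]
    | succ k ih =>
      intro i
      have h1 := hrec k i
      have h2 := ih i
      rw [Finset.sum_Icc_succ_top (by omega : 1 ≤ k + 1)]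
      linarith
  obtain ⟨E, hzpos, hdpos, hcomp⟩ := hSP.2.2 (m+1) hn
  simp only [Nat.add_sub_cancel] at E hzpos hdpos hcomp ⊢
  have hterm : ∀ i, z (m+1) i * (y (m+1) i - y m i) = 0 := by
    have hsum : ∑ i, z (m+1) i * (y (m+1) i - y m i) = 0 := by
      have := hcomp
      simpa [dotProduct] using this
    intro i
    exact (Finset.sum_eq_zero_iff_of_nonneg
      (fun j _ => mul_nonneg (hzpos j) (hdpos j))).mp hsum i (Finset.mem_univ i)
  have iff1 : (z (m+1) = 0) ↔ ∀ i, (R⁻¹ *ᵥ z m) i ≤ -((R⁻¹ *ᵥ u (m+1)) i) := by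
    constructor
    · intro h0 i
      have h1 := hrec m i
      rw [h0, Matrix.mulVec_zero] at h1
      have h2 := hdpos i
      simp only [Pi.zero_apply] at h1
      linarith
    · intro hw
      funext i
      simp only [Pi.zero_apply]
      rcases eq_or_lt_of_le (hzpos i) with h | h
      · exact h.symm
      · exfalso
        have hd0 : y (m+1) i - y m i = 0 := by
          rcases mul_eq_zero.mp (hterm i) with h' | h'
          · linarith
          · exact h'
        have h1 := hrec m i
        have h2 := hw i
        have h3 := hge (z (m+1)) hzpos i
        rw [hd0] at h1
        linarith
  refine ⟨iff1, ?_, ?_⟩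
  · rw [iff1]
    apply forall_congr'
    intro i
    rw [Finset.sum_Icc_succ_top (by omega : 1 ≤ m + 1), htel m i]
    constructor <;> intro h <;> linarith
  · intro h0
    funext i
    have h := htel (m+1) i
    rw [h0, Matrix.mulVec_zero] at h
    simp only [Pi.zero_apply, add_zero] at h
    simp only [Pi.add_apply, Pi.neg_apply, Finset.sum_apply]
    exact h
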